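/- arXiv:2103.15528 — 4 statements merged into one kernel-verified Lean document; each statement's English description precedes it below -/
import Mathlib

section
/- For Re(z) > 0 and q > 0 real, the partial derivative with respect to q of the alternating Hurwitz zeta function satisfies ∂/∂q ζ_E(z,q) = -z · ζ_E(z+1, q). -/
open Filter Finset Complex Topology

private lemma zE_summable_shift (c s : ℝ) (hc : 0 < c) (hs : 1 < s) :
    Summable (fun n : ℕ => ((n : ℝ) + c) ^ (-s)) := by
  have h1 : Summable (fun n : ℕ => ((n : ℝ) + 1) ^ (-s)) := by
    have h0 : Summable (fun n : ℕ => (n : ℝ) ^ (-s)) :=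
      Real.summable_nat_rpow.2 (by linarith)
    have := (summable_nat_add_iff 1).2 h0
    simpa [Nat.cast_add] using this
  set m := min 1 c with hm_def
  have hm : 0 < m := lt_min one_pos hc
  refine Summable.of_nonneg_of_le (fun n => by positivity) (fun n => ?_) (h1.mul_left (m ^ (-s)))
  have hn : (0 : ℝ) ≤ n := Nat.cast_nonneg n
  have h2 : ((n : ℝ) + 1) * m ≤ (n : ℝ) + c := by
    have := min_le_left (1 : ℝ) c
    have := min_le_right (1 : ℝ) c
    nlinarith
  calc ((n : ℝ) + c) ^ (-s) ≤ (((n : ℝ) + 1) * m) ^ (-s) :=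
        Real.rpow_le_rpow_of_nonpos (by positivity) h2 (by linarith)
    _ = m ^ (-s) * ((n : ℝ) + 1) ^ (-s) := by
        rw [Real.mul_rpow (by positivity) hm.le, mul_comm]

private lemma zE_norm_cpow (k : ℕ) (t : ℝ) (ht : 0 < t) (w : ℂ) :
    ‖((k : ℂ) + (t : ℂ)) ^ w‖ = ((k : ℝ) + t) ^ w.re := by
  have h : ((k : ℂ) + (t : ℂ)) = (((k : ℝ) + t : ℝ) : ℂ) := by push_cast; ring
  rw [h, Complex.norm_cpow_eq_rpow_re_of_pos (by positivity)]

private lemma zE_hasDerivAt_term (w : ℂ) (n : ℕ) (t : ℝ) (ht : 0 < t) :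
    HasDerivAt (fun s : ℝ => ((n : ℂ) + (s : ℂ)) ^ (-w)) (-w * ((n : ℂ) + (t : ℂ)) ^ (-w - 1)) t := by
  have hmem : ((n : ℂ) + (t : ℂ)) ∈ Complex.slitPlane := by
    apply Complex.mem_slitPlane_iff.2
    left
    simp only [Complex.add_re, Complex.natCast_re, Complex.ofReal_re]
    positivity
  have h1 : HasDerivAt (fun y : ℂ => (n : ℂ) + y) 1 (t : ℂ) :=
    (hasDerivAt_id ((t : ℝ) : ℂ)).const_add _
  have h2 := (h1.cpow_const (c := -w) hmem)
  have h3 := h2.comp_ofReal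
  simpa using h3

private lemma zE_hasDerivAt_real (w : ℂ) (x : ℝ) (hx : 0 < x) :
    HasDerivAt (fun s : ℝ => ((s : ℝ) : ℂ) ^ (-w)) (-w * ((x : ℝ) : ℂ) ^ (-w - 1)) x := by
  have := zE_hasDerivAt_term w 0 x hx
  simpa using this

private lemma zE_diff_bound (w : ℂ) (hw : 0 < w.re) (t : ℝ) (ht : 0 < t) (k : ℕ) :
    ‖((k : ℂ) + (t : ℂ)) ^ (-w) - (((k + 1 : ℕ) : ℂ) + (t : ℂ)) ^ (-w)‖ ≤
      ‖w‖ * ((k : ℝ) + t) ^ (-(w.re + 1)) := by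
  set S : Set ℝ := Set.Icc ((k : ℝ) + t) ((k : ℝ) + 1 + t) with hS
  have hx0 : (0 : ℝ) < (k : ℝ) + t := by positivity
  have hderiv : ∀ x ∈ S, HasDerivWithinAt (fun s : ℝ => ((s : ℝ) : ℂ) ^ (-w))
      (-w * ((x : ℝ) : ℂ) ^ (-w - 1)) S x := by
    intro x hx
    exact (zE_hasDerivAt_real w x (lt_of_lt_of_le hx0 hx.1)).hasDerivWithinAt
  have hbound : ∀ x ∈ S, ‖-w * ((x : ℝ) : ℂ) ^ (-w - 1)‖ ≤ ‖w‖ * ((k : ℝ) + t) ^ (-(w.re + 1)) := by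
    intro x hx
    have hxpos : 0 < x := lt_of_lt_of_le hx0 hx.1
    rw [norm_mul, norm_neg]
    rw [Complex.norm_cpow_eq_rpow_re_of_pos hxpos]
    have hre : (-w - 1).re = -(w.re + 1) := by simp; ring
    rw [hre]
    gcongr ‖w‖ * ?_
    exact Real.rpow_le_rpow_of_nonpos hx0 hx.1 (by linarith)
  have hmem1 : (k : ℝ) + t ∈ S := by constructor <;> simp <;> linarith
  have hmem2 : (k : ℝ) + 1 + t ∈ S := by constructor <;> simp <;> linarith
  have key := (convex_Icc _ _).norm_image_sub_le_of_norm_hasDerivWithin_le hderiv hbound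
    hmem2 hmem1
  have e1 : (((k : ℝ) + t : ℝ) : ℂ) = (k : ℂ) + (t : ℂ) := by push_cast; ring
  have e2 : (((k : ℝ) + 1 + t : ℝ) : ℂ) = ((k + 1 : ℕ) : ℂ) + (t : ℂ) := by push_cast; ring
  rw [e1, e2] at key
  simpa using key

private lemma zE_tendsto_partial (w : ℂ) (hw : 0 < w.re) (t : ℝ) (ht : 0 < t) :
    ∃ L, Tendsto (fun N : ℕ => ∑ n ∈ Finset.range N, (-1 : ℂ) ^ n / ((n : ℂ) + (t : ℂ)) ^ w)
      atTop (𝓝 L) := by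
  set a : ℕ → ℂ := fun k => ((k : ℂ) + (t : ℂ)) ^ (-w) with ha
  set E : ℕ → ℂ := fun n => ∑ j ∈ Finset.range n, (-1 : ℂ) ^ j with hE
  have hterm : ∀ n : ℕ, (-1 : ℂ) ^ n / ((n : ℂ) + (t : ℂ)) ^ w = a n * (-1 : ℂ) ^ n := by
    intro n
    simp only [ha]
    rw [Complex.cpow_neg, div_eq_mul_inv, mul_comm]
  have hEb : ∀ n, ‖E n‖ ≤ 1 := by
    intro n
    rw [hE]
    simp only [neg_one_geom_sum]
    split_ifs <;> simp
  set c : ℕ → ℂ := fun i => (a (i + 1) - a i) * E (i + 1) with hc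
  have hcsum : Summable c := by
    apply Summable.of_norm_bounded (g := fun i : ℕ => ‖w‖ * ((i : ℝ) + t) ^ (-(w.re + 1)))
      ((zE_summable_shift t (w.re + 1) ht (by linarith)).mul_left _)
    intro i
    simp only [hc]
    calc ‖(a (i + 1) - a i) * E (i + 1)‖ ≤ ‖a (i + 1) - a i‖ * 1 := by
          rw [norm_mul]; gcongr; exact hEb _
      _ = ‖a i - a (i + 1)‖ := by rw [mul_one, norm_sub_rev]
      _ ≤ ‖w‖ * ((i : ℝ) + t) ^ (-(w.re + 1)) := zE_diff_bound w hw t ht i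
  have hC := hcsum.hasSum.tendsto_sum_nat
  have hB : Tendsto (fun N : ℕ => a (N - 1) * E N) atTop (𝓝 0) := by
    refine squeeze_zero_norm (a := fun N : ℕ => (((N - 1 : ℕ) : ℝ) + t) ^ (-w.re)) (fun N => ?_) ?_
    · 
      calc ‖a (N - 1) * E N‖ ≤ ‖a (N - 1)‖ * 1 := by rw [norm_mul]; gcongr; exact hEb _
        _ = (((N - 1 : ℕ) : ℝ) + t) ^ (-w.re) := by
            simp only [mul_one, ha]
            rw [zE_norm_cpow _ t ht, Complex.neg_re]
    · have h1 : Tendsto (fun N : ℕ => ((N - 1 : ℕ) : ℝ) + t) atTop atTop :=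
        tendsto_atTop_add_const_right _ t
          (tendsto_natCast_atTop_atTop.comp (tendsto_sub_atTop_nat 1))
      exact (tendsto_rpow_neg_atTop hw).comp h1
  have key : ∀ N : ℕ, (∑ n ∈ Finset.range N, (-1 : ℂ) ^ n / ((n : ℂ) + (t : ℂ)) ^ w) =
      a (N - 1) * E N - ∑ i ∈ Finset.range (N - 1), c i := by
    intro N
    simp only [hterm]
    have := Finset.sum_range_by_parts a (fun n => (-1 : ℂ) ^ n) N
    simpa [smul_eq_mul, hc, hE] using this
  refine ⟨0 - ∑' i, c i, ?_⟩
  have h2 : Tendsto (fun N : ℕ => ∑ i ∈ Finset.range (N - 1), c i) atTop (𝓝 (∑' i, c i)) :=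
    hC.comp (tendsto_sub_atTop_nat 1)
  exact (hB.sub h2).congr fun N => (key N).symm

private lemma zE_summable_abs (w : ℂ) (hw : 1 < w.re) (t : ℝ) (ht : 0 < t) :
    Summable (fun n : ℕ => (-1 : ℂ) ^ n / ((n : ℂ) + (t : ℂ)) ^ w) := by
  apply Summable.of_norm_bounded (g := fun n : ℕ => ((n : ℝ) + t) ^ (-w.re))
    (zE_summable_shift t w.re ht hw)
  intro n
  rw [norm_div, norm_pow, norm_neg, norm_one, one_pow, zE_norm_cpow _ t ht,
    Real.rpow_neg (by positivity), one_div]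

/-- The alternating Hurwitz zeta function, defined as the limit of the partial sums
`∑_{n=0}^{N-1} (-1)^n / (n+q)^z`. -/
noncomputable def zetaE (z q : ℂ) : ℂ :=
  Filter.limUnder Filter.atTop
    (fun N : ℕ => ∑ n ∈ Finset.range N, (-1 : ℂ) ^ n / ((n : ℂ) + q) ^ z)

private lemma zE_eq_tsum (w : ℂ) (hw : 1 < w.re) (t : ℝ) (ht : 0 < t) :
    zetaE w (t : ℂ) = ∑' n : ℕ, (-1 : ℂ) ^ n / ((n : ℂ) + (t : ℂ)) ^ w :=
  ((zE_summable_abs w hw t ht).hasSum.tendsto_sum_nat).limUnder_eq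

theorem zetaE_hasDerivAt_q (z : ℂ) (q : ℝ) (hz : 0 < z.re) (hq : 0 < q) :
    HasDerivAt (fun t : ℝ => zetaE z (t : ℂ)) (-z * zetaE (z + 1) (q : ℂ)) q := by
  set s : Set ℝ := Set.Ioi (q / 2) with hs_def
  have hs : IsOpen s := isOpen_Ioi
  have hqs : q ∈ s := by simp only [hs_def, Set.mem_Ioi]; linarith
  have hts : ∀ t ∈ s, (0 : ℝ) < t := fun t ht => lt_trans (by linarith) ht
  -- derivatives of partial sums
  have hderiv : ∀ N : ℕ, ∀ t ∈ s,
      HasDerivAt (fun u : ℝ => ∑ n ∈ Finset.range N, (-1 : ℂ) ^ n / ((n : ℂ) + (u : ℂ)) ^ z)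
        (∑ n ∈ Finset.range N, -z * ((-1 : ℂ) ^ n / ((n : ℂ) + (t : ℂ)) ^ (z + 1))) t := by
    intro N t ht
    have ht0 := hts t ht
    apply HasDerivAt.fun_sum
    intro n _
    have h1 := (zE_hasDerivAt_term z n t ht0).const_mul ((-1 : ℂ) ^ n)
    have e1 : (fun u : ℝ => (-1 : ℂ) ^ n / ((n : ℂ) + (u : ℂ)) ^ z) =
        fun u : ℝ => (-1 : ℂ) ^ n * ((n : ℂ) + (u : ℂ)) ^ (-z) := by
      funext u; rw [Complex.cpow_neg, div_eq_mul_inv]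
    rw [e1]
    have e2 : -z * ((-1 : ℂ) ^ n / ((n : ℂ) + (t : ℂ)) ^ (z + 1)) =
        (-1 : ℂ) ^ n * (-z * ((n : ℂ) + (t : ℂ)) ^ (-z - 1)) := by
      rw [show (-z - 1 : ℂ) = -(z + 1) by ring, Complex.cpow_neg, div_eq_mul_inv]; ring
    rw [e2]
    exact h1
  -- uniform convergence of derivatives
  have hsum_u : Summable (fun n : ℕ => ‖z‖ * ((n : ℝ) + q / 2) ^ (-(z.re + 1))) :=
    (zE_summable_shift (q / 2) (z.re + 1) (by linarith) (by linarith)).mul_left _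
  have hunif : TendstoUniformlyOn
      (fun N (t : ℝ) => ∑ n ∈ Finset.range N, -z * ((-1 : ℂ) ^ n / ((n : ℂ) + (t : ℂ)) ^ (z + 1)))
      (fun t : ℝ => ∑' n : ℕ, -z * ((-1 : ℂ) ^ n / ((n : ℂ) + (t : ℂ)) ^ (z + 1))) atTop s := by
    apply tendstoUniformlyOn_tsum_nat hsum_u
    intro n t ht
    have ht0 := hts t ht
    have hre : (z + 1).re = z.re + 1 := by simp
    rw [norm_mul, norm_neg, norm_div, norm_pow, norm_neg, norm_one, one_pow,
      zE_norm_cpow n t ht0 (z + 1), hre]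
    have h1 : 1 / ((n : ℝ) + t) ^ (z.re + 1) = ((n : ℝ) + t) ^ (-(z.re + 1)) := by
      rw [Real.rpow_neg (by positivity), one_div]
    rw [h1]
    gcongr ‖z‖ * ?_
    refine Real.rpow_le_rpow_of_nonpos (by positivity) ?_ (by linarith)
    have h2 : q / 2 < t := ht
    linarith
  -- pointwise convergence to zetaE
  have hpt : ∀ t ∈ s, Tendsto
      (fun N : ℕ => ∑ n ∈ Finset.range N, (-1 : ℂ) ^ n / ((n : ℂ) + (t : ℂ)) ^ z) atTop
      (𝓝 (zetaE z (t : ℂ))) := by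
    intro t ht
    obtain ⟨L, hL⟩ := zE_tendsto_partial z hz t (hts t ht)
    have : zetaE z (t : ℂ) = L := hL.limUnder_eq
    rw [this]
    exact hL
  have main := hasDerivAt_of_tendstoUniformlyOn hs hunif
    (Filter.Eventually.of_forall hderiv) hpt hqs
  have hfin : (∑' n : ℕ, -z * ((-1 : ℂ) ^ n / ((n : ℂ) + (q : ℂ)) ^ (z + 1))) =
      -z * zetaE (z + 1) (q : ℂ) := by
    rw [zE_eq_tsum (z + 1) (by simp; linarith) q hq, ← tsum_mul_left]
  rwa [hfin] at main
end

section
/- (Boole summation formula) Let α < β be integers, N a positive integer, and f a function on [α, β] with absolutely integrable (N+1)-th derivative. Then 2 Σ_{n=α}^{β-1} (-1)^n f(n) = Σ_{k=0}^{N} (E_k(0)/k!) ((-1)^{β-1} f^{(k)}(β) + (-1)^α f^{(k)}(α)) + (1/N!) ∫_α^β Ē_N(-t) f^{(N+1)}(t) dt. -/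
/-- The `n`-th Euler polynomial, defined via the recurrence coming from the
generating function `2 e^{xt}/(e^t + 1) = ∑ E_n(x) t^n/n!`. -/
noncomputable def eulerPoly : ℕ → ℝ → ℝ
  | n => fun x => x ^ n - (1/2) *
      ∑ k ∈ (Finset.range n).attach, (n.choose k.1 : ℝ) * eulerPoly k.1 x
  termination_by n => n
  decreasing_by exact Finset.mem_range.mp k.2


/-- The quasi-periodic Euler function: `Ē_n(x) = E_n(x)` on `[0,1)`, extended by
`Ē_n(x+1) = -Ē_n(x)`. -/
noncomputable def eulerBar (n : ℕ) (x : ℝ) : ℝ :=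
  (-1 : ℝ) ^ ⌊x⌋ * eulerPoly n (Int.fract x)

lemma eulerPoly_def (n : ℕ) (x : ℝ) :
    eulerPoly n x = x ^ n - (1/2) * ∑ k ∈ Finset.range n, (n.choose k : ℝ) * eulerPoly k x := by
  rw [eulerPoly]
  congr 1
  rw [← Finset.sum_attach (Finset.range n) (fun k => (n.choose k : ℝ) * eulerPoly k x)]

lemma eulerPoly_zero (x : ℝ) : eulerPoly 0 x = 1 := by
  rw [eulerPoly_def]; simp

lemma eulerPoly_add_one (n : ℕ) (x : ℝ) :
    eulerPoly n (x + 1) + eulerPoly n x = 2 * x ^ n := by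
  induction n using Nat.strong_induction_on with
  | _ n ih =>
    rw [eulerPoly_def, eulerPoly_def]
    have h : ∀ k ∈ Finset.range n, (n.choose k : ℝ) * eulerPoly k (x+1) + (n.choose k : ℝ) * eulerPoly k x = (n.choose k : ℝ) * (2 * x ^ k) := by
      intro k hk
      rw [← mul_add, ih k (Finset.mem_range.mp hk)]
    have hsum : ∑ k ∈ Finset.range n, (n.choose k : ℝ) * eulerPoly k (x+1)
        + ∑ k ∈ Finset.range n, (n.choose k : ℝ) * eulerPoly k x
        = ∑ k ∈ Finset.range n, (n.choose k : ℝ) * (2 * x ^ k) := by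
      rw [← Finset.sum_add_distrib]; exact Finset.sum_congr rfl h
    have hbin : (x + 1) ^ n = ∑ k ∈ Finset.range (n+1), (n.choose k : ℝ) * x ^ k := by
      rw [add_pow]
      exact Finset.sum_congr rfl (fun k _ => by ring)
    have : ∑ k ∈ Finset.range n, (n.choose k : ℝ) * x ^ k = (x+1)^n - x^n := by
      rw [hbin, Finset.sum_range_succ]; simp
    have h2 : ∑ k ∈ Finset.range n, (n.choose k : ℝ) * (2 * x ^ k)
        = 2 * ((x+1)^n - x^n) := by
      rw [← this, Finset.mul_sum]
      exact Finset.sum_congr rfl (fun k _ => by ring)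
    rw [h2] at hsum
    linarith [hsum]

lemma eulerPoly_one_eq_neg (n : ℕ) (hn : 1 ≤ n) : eulerPoly n 1 = - eulerPoly n 0 := by
  have := eulerPoly_add_one n 0
  rw [zero_add, zero_pow (by omega)] at this
  linarith

lemma eulerPoly_hasDerivAt (n : ℕ) (x : ℝ) :
    HasDerivAt (eulerPoly n) ((n : ℝ) * eulerPoly (n - 1) x) x := by
  induction n using Nat.strong_induction_on generalizing x with
  | _ n ih =>
    have hfun : eulerPoly n = fun y : ℝ => y ^ n -
        (1/2) * ∑ k ∈ Finset.range n, (n.choose k : ℝ) * eulerPoly k y :=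
      funext fun y => eulerPoly_def n y
    match n with
    | 0 =>
      have : eulerPoly 0 = fun _ : ℝ => (1:ℝ) := funext fun y => eulerPoly_zero y
      rw [this]
      simpa using hasDerivAt_const x (1:ℝ)
    | (m+1) =>
      have hd : HasDerivAt (eulerPoly (m+1))
          (((m+1 : ℕ) : ℝ) * x ^ m - (1/2) *
            ∑ k ∈ Finset.range (m+1), (( (m+1).choose k : ℝ)) * ((k : ℝ) * eulerPoly (k-1) x)) x := by
        rw [hfun]
        have h1 : HasDerivAt (fun y : ℝ => y ^ (m+1)) (((m+1:ℕ):ℝ) * x ^ m) x := by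
          simpa using hasDerivAt_pow (m+1) x
        have h2 : HasDerivAt (fun y : ℝ => ∑ k ∈ Finset.range (m+1), ((m+1).choose k : ℝ) * eulerPoly k y)
            (∑ k ∈ Finset.range (m+1), ((m+1).choose k : ℝ) * ((k:ℝ) * eulerPoly (k-1) x)) x := by
          apply HasDerivAt.fun_sum
          intro k hk
          exact (ih k (Finset.mem_range.mp hk) x).const_mul _
        exact h1.sub (h2.const_mul (1/2))
      convert hd using 1
      simp only [Nat.add_sub_cancel]
      rw [eulerPoly_def m x]
      have key : ∑ k ∈ Finset.range (m+1), (((m+1).choose k : ℝ)) * ((k : ℝ) * eulerPoly (k-1) x)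
          = ((m+1:ℕ):ℝ) * ∑ j ∈ Finset.range m, ((m.choose j : ℝ)) * eulerPoly j x := by
        rw [Finset.sum_range_succ', Finset.mul_sum]
        simp only [Nat.cast_zero, zero_mul, mul_zero, add_zero]
        apply Finset.sum_congr rfl
        intro j _
        have h3 : ((m+1).choose (j+1) : ℝ) * ((j+1 : ℕ) : ℝ) = ((m+1 : ℕ) : ℝ) * (m.choose j : ℝ) := by
          rw [← Nat.cast_mul, ← Nat.cast_mul, Nat.add_one_mul_choose_eq]
        push_cast at h3 ⊢
        linear_combination eulerPoly j x * h3
      rw [key]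
      push_cast
      ring

lemma eulerPoly_continuous (n : ℕ) : Continuous (eulerPoly n) :=
  Differentiable.continuous (fun x => (eulerPoly_hasDerivAt n x).differentiableAt)

section

variable {N : ℕ} {f : ℝ → ℝ}

lemma hFd (hf : ContDiff ℝ (N + 1 : ℕ) f) {k : ℕ} (hk : k ≤ N) (x : ℝ) :
    HasDerivAt (iteratedDeriv k f) (iteratedDeriv (k+1) f x) x := by
  have hd : Differentiable ℝ (iteratedDeriv k f) := by
    apply hf.differentiable_iteratedDeriv
    exact_mod_cast Nat.lt_succ_of_le hk
  have := (hd x).hasDerivAt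
  rwa [show deriv (iteratedDeriv k f) x = iteratedDeriv (k+1) f x by
    rw [iteratedDeriv_succ]] at this

lemma hFc (hf : ContDiff ℝ (N + 1 : ℕ) f) {k : ℕ} (hk : k ≤ N + 1) :
    Continuous (iteratedDeriv k f) := by
  apply hf.continuous_iteratedDeriv
  exact_mod_cast hk

lemma key_interval (hf : ContDiff ℝ (N + 1 : ℕ) f) (a : ℝ) :
    ∀ M, M ≤ N →
      (∑ k ∈ Finset.range (M+1), eulerPoly k 0 / k.factorial *
          (iteratedDeriv k f (a+1) + iteratedDeriv k f a))
        - (1 / M.factorial) * ∫ t in a..(a+1), eulerPoly M (a+1-t) * iteratedDeriv (M+1) f t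
      = 2 * f a := by
  intro M
  induction M with
  | zero =>
    intro _
    have h1 : (∫ t in a..(a+1), eulerPoly 0 (a+1-t) * iteratedDeriv 1 f t)
        = ∫ t in a..(a+1), iteratedDeriv 1 f t := by
      apply intervalIntegral.integral_congr
      intro t _
      simp only [eulerPoly_zero, one_mul]
    have h2 : (∫ t in a..(a+1), iteratedDeriv 1 f t) = f (a+1) - f a := by
      apply intervalIntegral.integral_eq_sub_of_hasDerivAt
      · intro x _
        have := hFd hf (Nat.zero_le N) x
        rwa [iteratedDeriv_zero] at this
      · exact (hFc hf (by omega)).intervalIntegrable _ _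
    rw [h1, h2]
    simp [eulerPoly_zero, iteratedDeriv_zero]
    ring
  | succ M ih =>
    intro hM
    have hMN : M ≤ N := by omega
    -- integration by parts
    set F := fun k => iteratedDeriv k f with hF
    have hu : ∀ x ∈ Set.uIcc a (a+1), HasDerivAt (fun t => eulerPoly (M+1) (a+1-t))
        (-(((M+1 : ℕ) : ℝ) * eulerPoly M (a+1-x))) x := by
      intro x _
      have hinner : HasDerivAt (fun t : ℝ => a+1-t) (-1) x := (hasDerivAt_id x).const_sub (a+1)
      have houter := eulerPoly_hasDerivAt (M+1) (a+1-x)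
      have := HasDerivAt.comp x houter hinner
      simp only [Nat.add_sub_cancel] at this
      exact this.congr_deriv (by ring)
    have hv : ∀ x ∈ Set.uIcc a (a+1), HasDerivAt (F (M+1)) (F (M+2) x) x :=
      fun x _ => hFd hf hM x
    have hu' : IntervalIntegrable (fun x => -(((M+1 : ℕ) : ℝ) * eulerPoly M (a+1-x)))
        MeasureTheory.volume a (a+1) := by
      apply Continuous.intervalIntegrable
      exact (continuous_const.mul ((eulerPoly_continuous M).comp (continuous_const.sub continuous_id))).neg
    have hv' : IntervalIntegrable (F (M+2)) MeasureTheory.volume a (a+1) :=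
      (hFc hf (by omega)).intervalIntegrable _ _
    have ibp := intervalIntegral.integral_mul_deriv_eq_deriv_mul hu hv hu' hv'
    have hval1 : a + 1 - (a + 1) = (0:ℝ) := by ring
    have hval2 : a + 1 - a = (1:ℝ) := by ring
    rw [hval1, hval2, eulerPoly_one_eq_neg (M+1) (by omega)] at ibp
    have hrw : (∫ x in a..(a+1), -(((M+1:ℕ):ℝ) * eulerPoly M (a+1-x)) * F (M+1) x)
        = -((M+1:ℕ):ℝ) * ∫ x in a..(a+1), eulerPoly M (a+1-x) * F (M+1) x := by
      rw [← intervalIntegral.integral_const_mul]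
      apply intervalIntegral.integral_congr
      intro t _
      ring
    rw [hrw] at ibp
    -- now algebra
    have IH := ih hMN
    rw [Finset.sum_range_succ]
    have hfac : ((M+1).factorial : ℝ) = ((M+1 : ℕ) : ℝ) * (M.factorial : ℝ) := by
      rw [Nat.factorial_succ]; push_cast; ring
    have hfacpos : (0:ℝ) < (M.factorial : ℝ) := by exact_mod_cast M.factorial_pos
    have hM1pos : (0:ℝ) < ((M+1:ℕ):ℝ) := by positivity
    rw [show F (M+1+1) = F (M+2) from rfl] at *
    calc (∑ k ∈ Finset.range (M+1), eulerPoly k 0 / k.factorial * (F k (a+1) + F k a))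
          + eulerPoly (M+1) 0 / (M+1).factorial * (F (M+1) (a+1) + F (M+1) a)
          - (1 / (M+1).factorial) * ∫ t in a..(a+1), eulerPoly (M+1) (a+1-t) * F (M+2) t
        = (∑ k ∈ Finset.range (M+1), eulerPoly k 0 / k.factorial * (F k (a+1) + F k a))
          - (1 / M.factorial) * ∫ t in a..(a+1), eulerPoly M (a+1-t) * F (M+1) t := by
          rw [ibp, hfac]
          field_simp
          ring
      _ = 2 * f a := IH

end

lemma neg_one_zpow_sq (m : ℤ) : (-1:ℝ)^m * (-1:ℝ)^m = 1 := by
  rw [← zpow_add₀ (by norm_num : (-1:ℝ) ≠ 0), show m+m = 2*m by ring, zpow_mul]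
  norm_num

lemma neg_one_zpow_neg (m : ℤ) : (-1:ℝ)^(-m) = (-1:ℝ)^m := by
  rw [zpow_neg]
  exact inv_eq_of_mul_eq_one_right (neg_one_zpow_sq m)

lemma neg_one_zpow_add_one (m : ℤ) : (-1:ℝ)^(m+1) = -(-1:ℝ)^m := by
  rw [zpow_add₀ (by norm_num : (-1:ℝ) ≠ 0)]
  simp

lemma eulerBar_eq_on {N : ℕ} (hN : 1 ≤ N) (n : ℤ) {t : ℝ} (h1 : (n:ℝ) ≤ t) (h2 : t ≤ (n:ℝ)+1) :
    eulerBar N (-t) = (-1:ℝ)^(n+1) * eulerPoly N ((n:ℝ)+1-t) := by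
  rcases eq_or_lt_of_le h1 with heq | hlt
  · subst heq
    unfold eulerBar
    rw [show -(n:ℝ) = ((-n : ℤ) : ℝ) by push_cast; ring, Int.floor_intCast, Int.fract_intCast]
    rw [show (n:ℝ)+1-(n:ℝ) = 1 by ring, eulerPoly_one_eq_neg N hN, neg_one_zpow_neg,
      neg_one_zpow_add_one]
    ring
  · unfold eulerBar
    have hfloor : ⌊-t⌋ = -(n+1) := by
      rw [Int.floor_eq_iff]
      constructor
      · push_cast; linarith
      · push_cast; linarith
    have hfract : Int.fract (-t) = (n:ℝ)+1-t := by
      rw [Int.fract, hfloor]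
      push_cast; ring
    rw [hfloor, hfract, neg_one_zpow_neg]

lemma telescope_Ico (g : ℤ → ℝ) {α β : ℤ} (h : α ≤ β) :
    ∑ n ∈ Finset.Ico α β, (g n - g (n+1)) = g α - g β := by
  refine Int.le_induction (motive := fun b _ => ∑ n ∈ Finset.Ico α b, (g n - g (n+1)) = g α - g b)
    (by simp) (fun b hb ih => ?_) β h
  have hins : Finset.Ico α (b+1) = insert b (Finset.Ico α b) := by
    ext x; simp; omega
  rw [hins, Finset.sum_insert (by simp), ih]
  ring

lemma integral_sum_Ico (G : ℝ → ℝ)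
    (hG : ∀ n : ℤ, IntervalIntegrable G MeasureTheory.volume (n:ℝ) ((n:ℝ)+1))
    {α β : ℤ} (h : α ≤ β) :
    (∑ n ∈ Finset.Ico α β, ∫ t in (n:ℝ)..((n:ℝ)+1), G t) = ∫ t in (α:ℝ)..(β:ℝ), G t := by
  refine (Int.le_induction (motive := fun b _ => IntervalIntegrable G MeasureTheory.volume (α:ℝ) (b:ℝ) ∧
      (∑ n ∈ Finset.Ico α b, ∫ t in (n:ℝ)..((n:ℝ)+1), G t) = ∫ t in (α:ℝ)..(b:ℝ), G t)
    (by simp [intervalIntegrable_const_iff]) (fun b hb ih => ?_) β h).2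
  obtain ⟨hint, hsum⟩ := ih
  have hb1 : IntervalIntegrable G MeasureTheory.volume (b:ℝ) ((b:ℝ)+1) := hG b
  have hcast : ((b + 1 : ℤ) : ℝ) = (b:ℝ)+1 := by push_cast; ring
  constructor
  · rw [hcast]; exact hint.trans hb1
  · have hins : Finset.Ico α (b+1) = insert b (Finset.Ico α b) := by
      ext x; simp; omega
    rw [hins, Finset.sum_insert (by simp), hsum, hcast, add_comm]
    exact intervalIntegral.integral_add_adjacent_intervals hint hb1

lemma per_interval {N : ℕ} (hN : 1 ≤ N) {f : ℝ → ℝ} (hf : ContDiff ℝ (N + 1 : ℕ) f) (n : ℤ) :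
    2 * ((-1:ℝ)^n * f n) =
      (-1:ℝ)^n * ∑ k ∈ Finset.range (N+1), eulerPoly k 0 / k.factorial *
        (iteratedDeriv k f ((n:ℝ)+1) + iteratedDeriv k f n)
      + (1 / N.factorial) * ∫ t in (n:ℝ)..((n:ℝ)+1), eulerBar N (-t) * iteratedDeriv (N+1) f t := by
  have hkey := key_interval hf (n:ℝ) N le_rfl
  have hbar : (∫ t in (n:ℝ)..((n:ℝ)+1), eulerBar N (-t) * iteratedDeriv (N+1) f t)
      = (-1:ℝ)^(n+1) * ∫ t in (n:ℝ)..((n:ℝ)+1), eulerPoly N ((n:ℝ)+1-t) * iteratedDeriv (N+1) f t := by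
    rw [← intervalIntegral.integral_const_mul]
    apply intervalIntegral.integral_congr
    intro t ht
    rw [Set.uIcc_of_le (by linarith)] at ht
    simp only
    rw [eulerBar_eq_on hN n ht.1 ht.2]
    ring
  rw [hbar, neg_one_zpow_add_one]
  linear_combination (-(-1:ℝ)^n) * hkey

theorem boole_summation (α β : ℤ) (hαβ : α < β) (N : ℕ) (hN : 1 ≤ N) (f : ℝ → ℝ)
    (hf : ContDiff ℝ (N + 1 : ℕ) f)
    (hint : IntervalIntegrable (iteratedDeriv (N + 1) f) MeasureTheory.volume α β) :
    2 * ∑ n ∈ Finset.Ico α β, (-1 : ℝ) ^ n * f n =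
      ∑ k ∈ Finset.range (N + 1), (eulerPoly k 0 / k.factorial) *
        ((-1 : ℝ) ^ (β - 1) * iteratedDeriv k f β + (-1 : ℝ) ^ α * iteratedDeriv k f α) +
      (1 / N.factorial) * ∫ t in (α : ℝ)..(β : ℝ), eulerBar N (-t) * iteratedDeriv (N + 1) f t := by
  have hαβ' : α ≤ β := le_of_lt hαβ
  set F := fun k => iteratedDeriv k f with hFdef
  set G := fun t => eulerBar N (-t) * F (N+1) t with hGdef
  have hGint : ∀ n : ℤ, IntervalIntegrable G MeasureTheory.volume (n:ℝ) ((n:ℝ)+1) := by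
    intro n
    apply ContinuousOn.intervalIntegrable
    have hcont : ContinuousOn (fun t => (-1:ℝ)^(n+1) * eulerPoly N ((n:ℝ)+1-t) * F (N+1) t)
        (Set.uIcc (n:ℝ) ((n:ℝ)+1)) := by
      apply Continuous.continuousOn
      exact (continuous_const.mul ((eulerPoly_continuous N).comp
        (continuous_const.sub continuous_id))).mul (hFc hf le_rfl)
    apply hcont.congr
    intro t ht
    rw [Set.uIcc_of_le (by linarith)] at ht
    simp only [hGdef]
    rw [eulerBar_eq_on hN n ht.1 ht.2]
  have step1 : 2 * ∑ n ∈ Finset.Ico α β, (-1 : ℝ) ^ n * f n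
      = ∑ n ∈ Finset.Ico α β, ((-1:ℝ)^n * ∑ k ∈ Finset.range (N+1),
          eulerPoly k 0 / k.factorial * (F k ((n:ℝ)+1) + F k (n:ℝ)))
        + (1 / N.factorial) * ∑ n ∈ Finset.Ico α β, ∫ t in (n:ℝ)..((n:ℝ)+1), G t := by
    rw [Finset.mul_sum, Finset.mul_sum, ← Finset.sum_add_distrib]
    apply Finset.sum_congr rfl
    intro n _
    exact per_interval hN hf n
  rw [step1, integral_sum_Ico G hGint hαβ']
  congr 1
  have hb : (-1:ℝ)^β = -(-1:ℝ)^(β-1) := by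
    have h := neg_one_zpow_add_one (β-1)
    rw [show β-1+1 = β by ring] at h
    linarith
  calc ∑ n ∈ Finset.Ico α β, ((-1:ℝ)^n * ∑ k ∈ Finset.range (N+1),
        eulerPoly k 0 / k.factorial * (F k ((n:ℝ)+1) + F k (n:ℝ)))
      = ∑ n ∈ Finset.Ico α β, ∑ k ∈ Finset.range (N+1),
          ((eulerPoly k 0 / k.factorial * ((-1:ℝ)^n * F k (n:ℝ)))
            - (eulerPoly k 0 / k.factorial * ((-1:ℝ)^(n+1) * F k (((n+1:ℤ)):ℝ)))) := by
        apply Finset.sum_congr rfl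
        intro n _
        rw [Finset.mul_sum]
        apply Finset.sum_congr rfl
        intro j _
        push_cast
        rw [neg_one_zpow_add_one]
        ring
    _ = ∑ k ∈ Finset.range (N+1), ∑ n ∈ Finset.Ico α β,
          ((eulerPoly k 0 / k.factorial * ((-1:ℝ)^n * F k (n:ℝ)))
            - (eulerPoly k 0 / k.factorial * ((-1:ℝ)^(n+1) * F k (((n+1:ℤ)):ℝ)))) :=
        Finset.sum_comm
    _ = ∑ k ∈ Finset.range (N + 1), (eulerPoly k 0 / k.factorial) *
        ((-1 : ℝ) ^ (β - 1) * F k (β:ℝ) + (-1 : ℝ) ^ α * F k (α:ℝ)) := by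
        apply Finset.sum_congr rfl
        intro k _
        rw [telescope_Ico (fun m => eulerPoly k 0 / k.factorial * ((-1:ℝ)^m * F k (m:ℝ))) hαβ']
        rw [hb]
        ring
end

section
/- For every natural number k ≥ 1 and every complex z, the derivative of the falling binomial satisfies d/dz [C(-z, k)] = Σ_{j=0}^{k-1} ((-1)^{k-j}/(k-j)) C(-z, j), where C(-z, k) = (-z)(-z-1)⋯(-z-k+1)/k!. -/
open Finset

noncomputable def fb (j : ℕ) (z : ℂ) : ℂ :=
  (∏ i ∈ Finset.range j, (-z - (i : ℂ))) / (j.factorial : ℂ)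

lemma fb_zero (z : ℂ) : fb 0 z = 1 := by simp [fb]

lemma fb_diff (j : ℕ) : Differentiable ℂ (fb j) := by
  unfold fb
  apply Differentiable.div_const
  apply Differentiable.fun_finsetProd
  intro i _
  exact (differentiable_id.neg).sub_const _

lemma fb_succ (j : ℕ) (z : ℂ) : fb (j+1) z = fb j z * (-z - j) / ((j:ℂ)+1) := by
  unfold fb
  rw [Finset.prod_range_succ, Nat.factorial_succ]
  have h1 : (j.factorial : ℂ) ≠ 0 := Nat.cast_ne_zero.mpr j.factorial_ne_zero
  have h2 : ((j:ℂ)+1) ≠ 0 := Nat.cast_add_one_ne_zero j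
  push_cast
  rw [div_mul_eq_mul_div, div_div]
  rw [mul_comm ((j:ℂ)+1)]

lemma fb_rec (j : ℕ) (z : ℂ) : fb (j+1) z * ((j:ℂ)+1) = fb j z * (-z - j) := by
  have h2 : ((j:ℂ)+1) ≠ 0 := Nat.cast_add_one_ne_zero j
  rw [fb_succ]; field_simp

lemma tele (k : ℕ) (z : ℂ) :
    ∑ j ∈ range k, (-1:ℂ)^(k-j) * (fb (j+1) z + fb j z) = -fb k z + (-1:ℂ)^k := by
  have h := Finset.sum_range_sub (fun j => -(-1:ℂ)^(k-j) * fb j z) k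
  simp only [Nat.sub_self, pow_zero, Nat.sub_zero, fb_zero] at h
  rw [← show -(1:ℂ) * fb k z - -(-1:ℂ)^k * 1 = -fb k z + (-1:ℂ)^k by ring, ← h]
  apply Finset.sum_congr rfl
  intro j hj
  rw [Finset.mem_range] at hj
  have e : k - j = (k-(j+1))+1 := by omega
  rw [e, pow_succ]
  ring

lemma sum_id (k : ℕ) (z : ℂ) :
    (∑ j ∈ range k, ((-1:ℂ)^(k-j)/((k:ℂ)-(j:ℂ))) * fb j z) * (-z - k) - fb k z
    = ((k:ℂ)+1) * ∑ j ∈ range (k+1), ((-1:ℂ)^(k+1-j)/(((k:ℂ)+1)-(j:ℂ))) * fb j z := by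
  have hL : (∑ j ∈ range k, ((-1:ℂ)^(k-j)/((k:ℂ)-(j:ℂ))) * fb j z) * (-z - k)
      = ∑ j ∈ range k, ((-1:ℂ)^(k-j) * ((j:ℂ)+1) / ((k:ℂ)-(j:ℂ)) * fb (j+1) z
          - (-1:ℂ)^(k-j) * fb j z) := by
    rw [Finset.sum_mul]
    apply Finset.sum_congr rfl
    intro j hj
    rw [Finset.mem_range] at hj
    have hd : ((k:ℂ)-(j:ℂ)) ≠ 0 := by
      have : (j:ℂ) ≠ (k:ℂ) := by exact_mod_cast hj.ne
      exact sub_ne_zero.mpr (Ne.symm this)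
    have hr := fb_rec j z
    field_simp
    linear_combination (-1:ℂ) * hr
  have hR : ((k:ℂ)+1) * ∑ j ∈ range (k+1), ((-1:ℂ)^(k+1-j)/(((k:ℂ)+1)-(j:ℂ))) * fb j z
      = ∑ j ∈ range k, ((k:ℂ)+1) * ((-1:ℂ)^(k-j)/((k:ℂ)-(j:ℂ))) * fb (j+1) z
        + (-1:ℂ)^(k+1) := by
    rw [Finset.mul_sum, Finset.sum_range_succ']
    have h2 : ((k:ℂ)+1) ≠ 0 := Nat.cast_add_one_ne_zero k
    congr 1
    · apply Finset.sum_congr rfl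
      intro j hj
      push_cast
      ring
    · rw [Nat.sub_zero, fb_zero]
      field_simp
      simp
  rw [hL, hR]
  have htele := tele k z
  have hmid : ∑ j ∈ range k, ((-1:ℂ)^(k-j) * ((j:ℂ)+1) / ((k:ℂ)-(j:ℂ)) * fb (j+1) z
          - (-1:ℂ)^(k-j) * fb j z)
      - ∑ j ∈ range k, ((k:ℂ)+1) * ((-1:ℂ)^(k-j)/((k:ℂ)-(j:ℂ))) * fb (j+1) z
      = ∑ j ∈ range k, (-((-1:ℂ)^(k-j) * (fb (j+1) z + fb j z))) := by
    rw [← Finset.sum_sub_distrib]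
    apply Finset.sum_congr rfl
    intro j hj
    rw [Finset.mem_range] at hj
    have hd : ((k:ℂ)-(j:ℂ)) ≠ 0 := by
      have : (j:ℂ) ≠ (k:ℂ) := by exact_mod_cast hj.ne
      exact sub_ne_zero.mpr (Ne.symm this)
    have hr := fb_rec j z
    field_simp
    ring
  have hsum : ∑ j ∈ range k, (-((-1:ℂ)^(k-j) * (fb (j+1) z + fb j z)))
      = fb k z - (-1:ℂ)^k := by
    rw [Finset.sum_neg_distrib, htele]; ring
  linear_combination hmid + hsum

theorem deriv_binom_neg (k : ℕ) (hk : 1 ≤ k) (z : ℂ) :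
    deriv (fun w : ℂ => (∏ i ∈ Finset.range k, (-w - (i : ℂ))) / (k.factorial : ℂ)) z =
      ∑ j ∈ Finset.range k, ((-1 : ℂ) ^ (k - j) / ((k : ℂ) - (j : ℂ))) *
        ((∏ i ∈ Finset.range j, (-z - (i : ℂ))) / (j.factorial : ℂ)) := by
  have key : ∀ k : ℕ, 1 ≤ k →
      deriv (fb k) z = ∑ j ∈ range k, ((-1:ℂ)^(k-j)/((k:ℂ)-(j:ℂ))) * fb j z := by
    intro k hk
    induction k, hk using Nat.le_induction with
    | base =>
      have h1 : fb 1 = fun w : ℂ => -w := by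
        funext w; simp [fb]
      rw [h1]
      norm_num [fb_zero, deriv_neg]
    | succ k hk IH =>
      have hfb : fb (k+1) = fun w => fb k w * (-w - k) / ((k:ℂ)+1) :=
        funext fun w => fb_succ k w
      rw [hfb]
      have d1 : DifferentiableAt ℂ (fb k) z := (fb_diff k).differentiableAt
      have d2 : DifferentiableAt ℂ (fun w : ℂ => -w - (k:ℂ)) z :=
        ((differentiable_id.neg).sub_const _).differentiableAt
      rw [deriv_div_const, deriv_fun_mul d1 d2]
      have hder : deriv (fun w : ℂ => -w - (k:ℂ)) z = -1 := by
        simp [deriv_sub_const, deriv_neg]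
      rw [hder, IH]
      have h2 : ((k:ℂ)+1) ≠ 0 := Nat.cast_add_one_ne_zero k
      rw [div_eq_iff h2]
      push_cast
      linear_combination sum_id k z
  exact key k hk
end

section
/- For every natural number k ≥ 1 and complex z, the derivative of the normalized Pochhammer symbol satisfies d/dz [(z)_k / k!] = Σ_{j=0}^{k-1} (z)_j / (j! (k-j)), where (z)_k = z(z+1)⋯(z+k-1). -/
open Finset

private lemma diffP (k : ℕ) : Differentiable ℂ (fun w : ℂ => ∏ i ∈ Finset.range k, (w + (i : ℂ))) := by
  induction k with
  | zero => simp [Finset.range_zero]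
  | succ n ih =>
      have : (fun w : ℂ => ∏ i ∈ Finset.range (n+1), (w + (i : ℂ)))
          = fun w => (∏ i ∈ Finset.range n, (w + (i : ℂ))) * (w + (n : ℂ)) := by
        funext w; rw [Finset.prod_range_succ]
      rw [this]
      exact ih.mul (differentiable_id.add_const _)

private lemma sum_aux (k : ℕ) (z : ℂ) (R : ℕ → ℂ)
    (hrec : ∀ j : ℕ, (z + (j : ℂ)) * R j = ((j : ℂ) + 1) * R (j + 1)) :
    (∑ j ∈ Finset.range k, R j / ((k : ℂ) - (j : ℂ))) * ((z + (k : ℂ)) / ((k : ℂ) + 1))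
      + R k * (1 / ((k : ℂ) + 1))
    = ∑ j ∈ Finset.range (k+1), R j / (((k : ℂ) + 1) - (j : ℂ)) := by
  have hk1 : ((k : ℂ) + 1) ≠ 0 := Nat.cast_add_one_ne_zero k
  have hne : ∀ j ∈ Finset.range k, ((k : ℂ) - (j : ℂ)) ≠ 0 := by
    intro j hj
    have : (j : ℕ) ≠ k := Nat.ne_of_lt (Finset.mem_range.1 hj)
    exact sub_ne_zero.2 fun h => this (Nat.cast_injective h.symm)
  have hne1 : ∀ j ∈ Finset.range (k+1), (((k : ℂ) + 1) - (j : ℂ)) ≠ 0 := by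
    intro j hj
    have hjk : (j : ℕ) ≠ k + 1 := Nat.ne_of_lt (Finset.mem_range.1 hj)
    intro h
    apply hjk
    have : ((j : ℕ) : ℂ) = ((k+1 : ℕ) : ℂ) := by push_cast; linear_combination -h
    exact Nat.cast_injective this
  have main : (z + (k : ℂ)) * (∑ j ∈ Finset.range k, R j / ((k : ℂ) - (j : ℂ))) + R k
      = ((k : ℂ) + 1) * ∑ j ∈ Finset.range (k+1), R j / (((k : ℂ) + 1) - (j : ℂ)) := by
    calc (z + (k : ℂ)) * (∑ j ∈ Finset.range k, R j / ((k : ℂ) - (j : ℂ))) + R k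
        = (∑ j ∈ Finset.range k,
            (((j : ℂ) + 1) * R (j+1) / ((k : ℂ) - (j : ℂ)) + R j)) + R k := by
          rw [Finset.mul_sum]
          congr 1
          refine Finset.sum_congr rfl fun j hj => ?_
          have h1 := hne j hj
          have h2 := hrec j
          field_simp
          linear_combination h2
      _ = (∑ j ∈ Finset.range k, ((j : ℂ) + 1) * R (j+1) / ((k : ℂ) - (j : ℂ)))
            + ∑ j ∈ Finset.range (k+1), R j := by
          rw [Finset.sum_add_distrib, Finset.sum_range_succ]
          ring
      _ = (∑ j ∈ Finset.range (k+1), (j : ℂ) * R j / (((k : ℂ) + 1) - (j : ℂ)))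
            + ∑ j ∈ Finset.range (k+1), R j := by
          congr 1
          rw [Finset.sum_range_succ' (fun j => (j : ℂ) * R j / (((k : ℂ) + 1) - (j : ℂ))) k]
          simp only [Nat.cast_zero, zero_mul, zero_div, add_zero]
          refine Finset.sum_congr rfl fun j hj => ?_
          push_cast
          have hden : (k : ℂ) + 1 - ((j : ℂ) + 1) = (k : ℂ) - (j : ℂ) := by ring
          rw [hden]
      _ = ((k : ℂ) + 1) * ∑ j ∈ Finset.range (k+1), R j / (((k : ℂ) + 1) - (j : ℂ)) := by
          rw [Finset.mul_sum, ← Finset.sum_add_distrib]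
          refine Finset.sum_congr rfl fun j hj => ?_
          have h1 := hne1 j hj
          field_simp
          ring
  have lhs_eq : (∑ j ∈ Finset.range k, R j / ((k : ℂ) - (j : ℂ))) * ((z +
      (k : ℂ)) / ((k : ℂ) + 1)) + R k * (1 / ((k : ℂ) + 1))
      = ((z + (k : ℂ)) * (∑ j ∈ Finset.range k, R j / ((k : ℂ) - (j : ℂ))) + R k)
          / ((k : ℂ) + 1) := by
    field_simp
  rw [lhs_eq, main, mul_div_cancel_left₀ _ hk1]

private lemma sum_step (k : ℕ) (z : ℂ) :
    (∑ j ∈ Finset.range k,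
        (∏ i ∈ Finset.range j, (z + (i : ℂ))) / ((j.factorial : ℂ) * ((k : ℂ) - (j : ℂ))))
      * ((z + (k : ℂ)) / ((k : ℂ) + 1))
    + (∏ i ∈ Finset.range k, (z + (i : ℂ))) / (k.factorial : ℂ) * (1 / ((k : ℂ) + 1))
    = ∑ j ∈ Finset.range (k+1),
        (∏ i ∈ Finset.range j, (z + (i : ℂ))) / ((j.factorial : ℂ) * (((k : ℂ) + 1) - (j : ℂ))) := by
  have hrec : ∀ j : ℕ, (z + (j : ℂ)) * ((∏ i ∈ Finset.range j, (z + (i : ℂ))) / (j.factorial : ℂ))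
      = ((j : ℂ) + 1) * ((∏ i ∈ Finset.range (j+1), (z + (i : ℂ))) / ((j+1).factorial : ℂ)) := by
    intro j
    have hfj : ((j.factorial : ℕ) : ℂ) ≠ 0 := Nat.cast_ne_zero.2 j.factorial_ne_zero
    have hj1 : ((j : ℂ) + 1) ≠ 0 := Nat.cast_add_one_ne_zero j
    rw [Finset.prod_range_succ, Nat.factorial_succ]
    push_cast
    field_simp
  have := sum_aux k z (fun j => (∏ i ∈ Finset.range j, (z + (i : ℂ))) / (j.factorial : ℂ)) hrec
  simp only [div_div] at this ⊢
  exact this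

theorem deriv_pochhammer_div_factorial (k : ℕ) (hk : 1 ≤ k) (z : ℂ) :
    deriv (fun w : ℂ => (∏ i ∈ Finset.range k, (w + (i : ℂ))) / (k.factorial : ℂ)) z =
      ∑ j ∈ Finset.range k,
        (∏ i ∈ Finset.range j, (z + (i : ℂ))) / ((j.factorial : ℂ) * ((k : ℂ) - (j : ℂ))) := by
  induction k, hk using Nat.le_induction with
  | base =>
      have : (fun w : ℂ => (∏ i ∈ Finset.range 1, (w + (i : ℂ))) / ((1:ℕ).factorial : ℂ))
          = fun w : ℂ => w := by
        funext w; simp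
      rw [this]
      simp
  | succ k hk ih =>
      have hfun : (fun w : ℂ => (∏ i ∈ Finset.range (k+1), (w + (i : ℂ))) / ((k+1).factorial : ℂ))
          = fun w : ℂ => ((∏ i ∈ Finset.range k, (w + (i : ℂ))) / (k.factorial : ℂ))
              * ((w + (k : ℂ)) / ((k : ℂ) + 1)) := by
        funext w
        rw [Finset.prod_range_succ, Nat.factorial_succ]
        push_cast
        rw [div_mul_div_comm, mul_comm ((k : ℂ) + 1)]
      rw [hfun]
      have d1 : DifferentiableAt ℂ
          (fun w : ℂ => (∏ i ∈ Finset.range k, (w + (i : ℂ))) / (k.factorial : ℂ)) z :=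
        ((diffP k).div_const _).differentiableAt
      have d2 : DifferentiableAt ℂ (fun w : ℂ => (w + (k : ℂ)) / ((k : ℂ) + 1)) z :=
        ((differentiable_id.add_const _).div_const _).differentiableAt
      rw [deriv_fun_mul d1 d2]
      have e2 : deriv (fun w : ℂ => (w + (k : ℂ)) / ((k : ℂ) + 1)) z = 1 / ((k : ℂ) + 1) := by
        rw [deriv_div_const, deriv_add_const, deriv_id'']
      rw [e2, ih]
      have h := sum_step k z
      push_cast at h ⊢
      linear_combination h
end
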